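/- In the incremental reachability tree algorithm, after processing any sequence of edge insertions starting from the single-vertex tree {s}, a vertex u belongs to the maintained tree T if and only if u is reachable from s in the current graph. -/

import Mathlib

open Finset

variable {V : Type} [Fintype V] [DecidableEq V]

open scoped Classical in
/-- One step of Italiano's incremental reachability algorithm: insert the edge, and if its
tail is in the tree and its head is not, add to the tree everything the recursive scan
discovers, i.e. all vertices reachable from the head in the new graph. -/
noncomputable def italianoStep : (Finset (V × V) × Set V) → (V × V) → (Finset (V × V) × Set V) :=
  fun p e =>
    (insert e p.1,
      if e.1 ∈ p.2 then
        p.2 ∪ {x | Relation.ReflTransGen (fun a b => (a, b) ∈ insert e p.1) e.2 x}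
      else p.2)

open scoped Classical in
private lemma italiano_step_inv (s : V) (E : Finset (V × V)) (e : V × V)
    (T : Set V) (hT : T = {x | Relation.ReflTransGen (fun a b => (a, b) ∈ E) s x}) :
    (italianoStep (E, T) e).2 =
      {x | Relation.ReflTransGen (fun a b => (a, b) ∈ (italianoStep (E, T) e).1) s x} := by
  subst hT
  have hmono : ∀ x y, Relation.ReflTransGen (fun a b => (a, b) ∈ E) x y →
      Relation.ReflTransGen (fun a b => (a, b) ∈ insert e E) x y := by
    intro x y hx
    exact Relation.ReflTransGen.mono (fun a b h => Finset.mem_insert_of_mem h) x y hx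
  simp only [italianoStep]
  by_cases he : e.1 ∈ {x | Relation.ReflTransGen (fun a b => (a, b) ∈ E) s x}
  · simp only [if_pos he]
    ext x
    simp only [Set.mem_union, Set.mem_setOf_eq]
    constructor
    · rintro (hx | hx)
      · exact hmono s x hx
      · have hse2 : Relation.ReflTransGen (fun a b => (a, b) ∈ insert e E) s e.2 :=
          Relation.ReflTransGen.tail (hmono s e.1 he)
            (by simp : (e.1, e.2) ∈ insert e E)
        exact Relation.ReflTransGen.trans hse2 hx
    · intro hx
      induction hx with
      | refl => exact Or.inl Relation.ReflTransGen.refl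
      | @tail y z hyz hedge ih =>
        rcases ih with hy | hy
        · rcases Finset.mem_insert.mp hedge with h1 | h2
          · right
            have hz : z = e.2 := by
              have := congrArg Prod.snd h1; simpa using this
            rw [hz]
          · exact Or.inl (Relation.ReflTransGen.tail hy h2)
        · exact Or.inr (Relation.ReflTransGen.tail hy hedge)
  · simp only [if_neg he]
    ext x
    simp only [Set.mem_setOf_eq]
    constructor
    · exact fun hx => hmono s x hx
    · intro hx
      induction hx with
      | refl => exact Relation.ReflTransGen.refl
      | @tail y z hyz hedge ih =>
        rcases Finset.mem_insert.mp hedge with h1 | h2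
        · exfalso
          apply he
          have hy1 : y = e.1 := by have := congrArg Prod.fst h1; simpa using this
          exact Set.mem_setOf_eq ▸ (hy1 ▸ ih)
        · exact Relation.ReflTransGen.tail ih h2

private lemma italiano_fold_inv (s : V) (ops : List (V × V)) :
    ∀ E : Finset (V × V), ∀ T : Set V,
      T = {x | Relation.ReflTransGen (fun a b => (a, b) ∈ E) s x} →
      (ops.foldl italianoStep (E, T)).2 =
        {x | Relation.ReflTransGen (fun a b => (a, b) ∈ (ops.foldl italianoStep (E, T)).1) s x} := by
  induction ops with
  | nil => intro E T h; simpa using h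
  | cons e rest ih =>
    intro E T h
    simp only [List.foldl_cons]
    have hstep := italiano_step_inv s E e T h
    have : italianoStep (E, T) e = ((italianoStep (E, T) e).1, (italianoStep (E, T) e).2) := rfl
    rw [this]
    exact ih _ _ hstep

theorem italiano_tree_eq_reachable (s : V) (ops : List (V × V)) :
    ∀ u : V, u ∈ (ops.foldl italianoStep (∅, ({s} : Set V))).2 ↔
      Relation.ReflTransGen
        (fun a b => (a, b) ∈ (ops.foldl italianoStep (∅, ({s} : Set V))).1) s u := by
  have h0 : ({s} : Set V) = {x | Relation.ReflTransGen
      (fun a b => (a, b) ∈ (∅ : Finset (V × V))) s x} := by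
    ext x
    simp only [Set.mem_singleton_iff, Set.mem_setOf_eq]
    constructor
    · rintro rfl; exact Relation.ReflTransGen.refl
    · intro h
      induction h with
      | refl => rfl
      | tail _ hedge _ => simp at hedge
  intro u
  rw [italiano_fold_inv s ops ∅ _ h0]
  rfl
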